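/- arXiv:1512.02566 — 2 statements merged into one kernel-verified Lean document; each statement's English description precedes it below -/
import Mathlib

section
/- Let c : Fin d → ℂ with ∑_n |c_n|² = 1, let A be a d×d complex matrix, and let σ̄ = diag(|c_n|²). Then ∑_{i≠j} |c_i|²|c_j|²|A_{ji}|² ≤ tr(A σ̄ A† σ̄) ≤ ‖A‖²·∑_n |c_n|⁴. -/
open Matrix Finset

set_option maxHeartbeats 1000000
set_option synthInstance.maxHeartbeats 1000000

private lemma col_bound' (d : ℕ) (A : Matrix (Fin d) (Fin d) ℂ) (j : Fin d) :
    ∑ i, ‖A i j‖ ^ 2 ≤ ‖Matrix.toEuclideanCLM (𝕜 := ℂ) A‖ ^ 2 := by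
  set M := Matrix.toEuclideanCLM (𝕜 := ℂ) A
  set x : EuclideanSpace ℂ (Fin d) := EuclideanSpace.single j 1
  have hx : ‖x‖ = 1 := by simp [x]
  have h1 : ‖M x‖ ≤ ‖M‖ * ‖x‖ := M.le_opNorm x
  rw [hx, mul_one] at h1
  have h2 : M x = (WithLp.equiv _ _).symm (A.mulVec (Pi.single j 1)) := by
    have : x = (WithLp.equiv _ _).symm (Pi.single j 1) := rfl
    rw [this, WithLp.equiv_symm_apply, Matrix.toEuclideanCLM_toLp]
  have h3 : ‖M x‖ ^ 2 = ∑ i, ‖A i j‖ ^ 2 := by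
    rw [h2, EuclideanSpace.norm_eq, Real.sq_sqrt (by positivity)]
    refine Finset.sum_congr rfl fun i _ => ?_
    simp [Matrix.mulVec_single]
  calc ∑ i, ‖A i j‖ ^ 2 = ‖M x‖ ^ 2 := h3.symm
    _ ≤ ‖M‖ ^ 2 := pow_le_pow_left₀ (norm_nonneg _) h1 2

private lemma row_bound' (d : ℕ) (A : Matrix (Fin d) (Fin d) ℂ) (i : Fin d) :
    ∑ j, ‖A i j‖ ^ 2 ≤ ‖Matrix.toEuclideanCLM (𝕜 := ℂ) A‖ ^ 2 := by
  have h := col_bound' d Aᴴ i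
  have he : Matrix.toEuclideanCLM (𝕜 := ℂ) Aᴴ
      = star (Matrix.toEuclideanCLM (𝕜 := ℂ) A) := by
    rw [← Matrix.star_eq_conjTranspose, map_star]
  have hn : ‖star (Matrix.toEuclideanCLM (𝕜 := ℂ) A)‖
      = ‖Matrix.toEuclideanCLM (𝕜 := ℂ) A‖ := by
    rw [ContinuousLinearMap.star_eq_adjoint]
    exact ContinuousLinearMap.adjoint.norm_map _
  rw [he, hn] at h
  simpa [Matrix.conjTranspose_apply] using h

private lemma trace_eq' (d : ℕ) (f : Fin d → ℝ) (A : Matrix (Fin d) (Fin d) ℂ) :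
    (A * Matrix.diagonal (fun n => ((f n : ℝ) : ℂ)) * Aᴴ
      * Matrix.diagonal (fun n => ((f n : ℝ) : ℂ))).trace
    = ((∑ i, ∑ k, f i * f k * ‖A i k‖ ^ 2 : ℝ) : ℂ) := by
  simp only [Matrix.trace, Matrix.diag_apply, Matrix.mul_apply, Matrix.conjTranspose_apply,
    Matrix.diagonal_apply, ite_mul, mul_ite, zero_mul, mul_zero,
    Finset.sum_ite_eq, Finset.sum_ite_eq', Finset.mem_univ, if_true]
  push_cast
  refine Finset.sum_congr rfl fun i _ => ?_
  rw [Finset.sum_mul]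
  refine Finset.sum_congr rfl fun k _ => ?_
  have h : A i k * star (A i k) = ((‖A i k‖ ^ 2 : ℝ) : ℂ) := by
    rw [RCLike.star_def, Complex.mul_conj]
    norm_cast
    rw [Complex.normSq_eq_norm_sq]
  push_cast at h ⊢
  linear_combination (f k : ℂ) * (f i : ℂ) * h

/-- With `σ̄ = diag(|c_n|²)` and `∑ |c_n|² = 1`:
`∑_{i≠j} |c_i|²|c_j|²|A_{ji}|² ≤ tr(A σ̄ A† σ̄) ≤ ‖A‖² ∑_n |c_n|⁴`. -/
theorem offdiag_sum_le_trace_le (d : ℕ) (c : Fin d → ℂ)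
    (hc : ∑ n : Fin d, ‖c n‖ ^ 2 = 1) (A : Matrix (Fin d) (Fin d) ℂ) :
    (∑ i : Fin d, ∑ j : Fin d, if i ≠ j then ‖c i‖ ^ 2 * ‖c j‖ ^ 2 * ‖A j i‖ ^ 2 else 0)
        ≤ ((A * Matrix.diagonal (fun n => ((‖c n‖ ^ 2 : ℝ) : ℂ)) * Aᴴ
            * Matrix.diagonal (fun n => ((‖c n‖ ^ 2 : ℝ) : ℂ))).trace).re
    ∧ ((A * Matrix.diagonal (fun n => ((‖c n‖ ^ 2 : ℝ) : ℂ)) * Aᴴ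
            * Matrix.diagonal (fun n => ((‖c n‖ ^ 2 : ℝ) : ℂ))).trace).re
        ≤ ‖Matrix.toEuclideanCLM (𝕜 := ℂ) A‖ ^ 2 * ∑ n : Fin d, ‖c n‖ ^ 4 := by
  set s : Fin d → ℝ := fun n => ‖c n‖ ^ 2 with hs
  set N : ℝ := ‖Matrix.toEuclideanCLM (𝕜 := ℂ) A‖ with hN
  have hsnn : ∀ n, 0 ≤ s n := fun n => by positivity
  have htr : ((A * Matrix.diagonal (fun n => ((‖c n‖ ^ 2 : ℝ) : ℂ)) * Aᴴ
      * Matrix.diagonal (fun n => ((‖c n‖ ^ 2 : ℝ) : ℂ))).trace).re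
      = ∑ i, ∑ k, s i * s k * ‖A i k‖ ^ 2 := by
    rw [trace_eq' d s A, Complex.ofReal_re]
  set T : ℝ := ∑ i, ∑ k, s i * s k * ‖A i k‖ ^ 2 with hT
  constructor
  · rw [htr]
    have : (∑ i : Fin d, ∑ j : Fin d,
        if i ≠ j then ‖c i‖ ^ 2 * ‖c j‖ ^ 2 * ‖A j i‖ ^ 2 else 0)
        ≤ ∑ i : Fin d, ∑ j : Fin d, s i * s j * ‖A j i‖ ^ 2 := by
      refine Finset.sum_le_sum fun i _ => Finset.sum_le_sum fun j _ => ?_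
      split
      · exact le_rfl
      · positivity
    refine this.trans (le_of_eq ?_)
    rw [Finset.sum_comm]
    exact Finset.sum_congr rfl fun i _ => Finset.sum_congr rfl fun j _ => by ring
  · rw [htr]
    -- rewrite T as a sum over the product finset
    have hTprod : T = ∑ p ∈ (univ ×ˢ univ : Finset (Fin d × Fin d)),
        (s p.1 * ‖A p.1 p.2‖) * (s p.2 * ‖A p.1 p.2‖) := by
      rw [Finset.sum_product]
      exact Finset.sum_congr rfl fun i _ => Finset.sum_congr rfl fun j _ => by
        rw [sq (‖A i j‖)]; ring
    have hS : (0:ℝ) ≤ ∑ n, s n ^ 2 := by positivity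
    have hrow : ∑ p ∈ (univ ×ˢ univ : Finset (Fin d × Fin d)),
        (s p.1 * ‖A p.1 p.2‖) ^ 2 ≤ N ^ 2 * ∑ n, s n ^ 2 := by
      rw [Finset.sum_product]
      calc ∑ i, ∑ j, (s i * ‖A i j‖) ^ 2
          = ∑ i, s i ^ 2 * ∑ j, ‖A i j‖ ^ 2 := by
            refine Finset.sum_congr rfl fun i _ => ?_
            rw [Finset.mul_sum]
            exact Finset.sum_congr rfl fun j _ => by ring
        _ ≤ ∑ i, s i ^ 2 * N ^ 2 :=
            Finset.sum_le_sum fun i _ =>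
              mul_le_mul_of_nonneg_left (row_bound' d A i) (sq_nonneg _)
        _ = N ^ 2 * ∑ n, s n ^ 2 := by rw [← Finset.sum_mul, mul_comm]
    have hcol : ∑ p ∈ (univ ×ˢ univ : Finset (Fin d × Fin d)),
        (s p.2 * ‖A p.1 p.2‖) ^ 2 ≤ N ^ 2 * ∑ n, s n ^ 2 := by
      rw [Finset.sum_product, Finset.sum_comm]
      calc ∑ j, ∑ i, (s j * ‖A i j‖) ^ 2
          = ∑ j, s j ^ 2 * ∑ i, ‖A i j‖ ^ 2 := by
            refine Finset.sum_congr rfl fun j _ => ?_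
            rw [Finset.mul_sum]
            exact Finset.sum_congr rfl fun i _ => by ring
        _ ≤ ∑ j, s j ^ 2 * N ^ 2 :=
            Finset.sum_le_sum fun j _ =>
              mul_le_mul_of_nonneg_left (col_bound' d A j) (sq_nonneg _)
        _ = N ^ 2 * ∑ n, s n ^ 2 := by rw [← Finset.sum_mul, mul_comm]
    have hcs := Finset.sum_mul_sq_le_sq_mul_sq (univ ×ˢ univ : Finset (Fin d × Fin d))
      (fun p => s p.1 * ‖A p.1 p.2‖) (fun p => s p.2 * ‖A p.1 p.2‖)
    rw [← hTprod] at hcs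
    have hbound : T ^ 2 ≤ (N ^ 2 * ∑ n, s n ^ 2) ^ 2 := by
      calc T ^ 2 ≤ _ := hcs
        _ ≤ (N ^ 2 * ∑ n, s n ^ 2) * (N ^ 2 * ∑ n, s n ^ 2) :=
            mul_le_mul hrow hcol (Finset.sum_nonneg fun p _ => sq_nonneg _)
              (by positivity)
        _ = (N ^ 2 * ∑ n, s n ^ 2) ^ 2 := (sq _).symm
    have hTnn : 0 ≤ T := Finset.sum_nonneg fun i _ =>
      Finset.sum_nonneg fun j _ => by positivity
    have hfin : T ≤ N ^ 2 * ∑ n, s n ^ 2 :=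
      (pow_le_pow_iff_left₀ hTnn (by positivity) two_ne_zero).mp hbound
    refine hfin.trans (le_of_eq ?_)
    congr 1
    exact Finset.sum_congr rfl fun n _ => by rw [hs]; ring
end

section
/- For the error function erf(x) = (2/√π)∫₀ˣ e^{−t²}dt and any x ≥ 0, erf(x) ≤ √(1 − exp(−4x²/π)). -/
open Real MeasureTheory intervalIntegral

/-- The error function. -/
noncomputable def erf (x : ℝ) : ℝ :=
  (2 / Real.sqrt π) * ∫ t in (0 : ℝ)..x, Real.exp (-t ^ 2)

namespace WinitzkiAux

noncomputable def f (x : ℝ) : ℝ := ∫ t in (0:ℝ)..x, Real.exp (-t ^ 2)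

noncomputable def g (x : ℝ) : ℝ :=
  ∫ s in (0:ℝ)..1, (1 - Real.exp (-x ^ 2 * (1 + s ^ 2))) / (1 + s ^ 2)

lemma hf_deriv (x : ℝ) : HasDerivAt f (Real.exp (-x ^ 2)) x := by
  have hc : Continuous fun t : ℝ => Real.exp (-t ^ 2) := by continuity
  exact (hc.integral_hasStrictDerivAt 0 x).hasDerivAt

lemma f_subst (x : ℝ) : f x = x * ∫ s in (0:ℝ)..1, Real.exp (-x ^ 2 * s ^ 2) := by
  rcases eq_or_ne x 0 with rfl | hx
  · simp [f]
  · have := intervalIntegral.integral_comp_mul_left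
      (f := fun t : ℝ => Real.exp (-t ^ 2)) (a := (0:ℝ)) (b := 1) hx
    have h2 : (∫ s in (0:ℝ)..1, Real.exp (-x ^ 2 * s ^ 2))
        = ∫ s in (0:ℝ)..1, Real.exp (-(x * s) ^ 2) := by
      congr 1; ext s; ring_nf
    rw [h2, this]
    simp [f, smul_eq_mul]
    field_simp

lemma cont_aux (x : ℝ) : Continuous fun s : ℝ => (1 - Real.exp (-x ^ 2 * (1 + s ^ 2))) / (1 + s ^ 2) := by
  apply Continuous.div
  · continuity
  · continuity
  · intro s; positivity

lemma cont_aux' (x : ℝ) : Continuous fun s : ℝ => 2 * x * Real.exp (-x ^ 2 * (1 + s ^ 2)) := by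
  continuity

lemma hg_deriv (x₀ : ℝ) :
    HasDerivAt g (∫ s in (0:ℝ)..1, 2 * x₀ * Real.exp (-x₀ ^ 2 * (1 + s ^ 2))) x₀ := by
  have key := intervalIntegral.hasDerivAt_integral_of_dominated_loc_of_deriv_le
    (𝕜 := ℝ) (μ := volume) (a := (0:ℝ)) (b := 1)
    (F := fun x s => (1 - Real.exp (-x ^ 2 * (1 + s ^ 2))) / (1 + s ^ 2))
    (F' := fun x s => 2 * x * Real.exp (-x ^ 2 * (1 + s ^ 2)))
    (x₀ := x₀) (s := Metric.ball x₀ 1) (bound := fun _ => 2 * (|x₀| + 1))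
    (Metric.ball_mem_nhds x₀ one_pos)
    (Filter.Eventually.of_forall fun x => (cont_aux x).aestronglyMeasurable)
    ((cont_aux x₀).intervalIntegrable 0 1)
    (cont_aux' x₀).aestronglyMeasurable
    ?_ (intervalIntegrable_const) ?_
  · exact key.2
  · refine Filter.Eventually.of_forall fun s _ x hx => ?_
    have hx' : |x| ≤ |x₀| + 1 := by
      have := mem_ball_iff_norm.mp hx
      have h2 : |x - x₀| < 1 := by simpa [Real.norm_eq_abs] using this
      calc |x| = |x₀ + (x - x₀)| := by ring_nf
        _ ≤ |x₀| + |x - x₀| := abs_add_le _ _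
        _ ≤ |x₀| + 1 := by linarith
    have hexp : Real.exp (-x ^ 2 * (1 + s ^ 2)) ≤ 1 := by
      rw [Real.exp_le_one_iff]; nlinarith [sq_nonneg x, sq_nonneg s]
    have hexp0 : (0:ℝ) < Real.exp (-x ^ 2 * (1 + s ^ 2)) := Real.exp_pos _
    rw [Real.norm_eq_abs, abs_mul, abs_of_pos hexp0]
    calc |2 * x| * Real.exp (-x ^ 2 * (1 + s ^ 2)) ≤ |2 * x| * 1 := by
          apply mul_le_mul_of_nonneg_left hexp (abs_nonneg _)
      _ = 2 * |x| := by rw [abs_mul]; simp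
      _ ≤ 2 * (|x₀| + 1) := by linarith
  · refine Filter.Eventually.of_forall fun s _ x _ => ?_
    have hc : (0:ℝ) < 1 + s ^ 2 := by positivity
    have h1 : HasDerivAt (fun y : ℝ => -y ^ 2 * (1 + s ^ 2)) (-(2 * x) * (1 + s ^ 2)) x := by
      have := ((hasDerivAt_pow 2 x).neg.mul_const (1 + s ^ 2))
      simpa using this
    have h2 := h1.exp
    have h3 := ((hasDerivAt_const x (1:ℝ)).fun_sub h2).div_const (1 + s ^ 2)
    convert h3 using 1
    · rfl
    field_simp
    ring

lemma sq_eq (x : ℝ) : f x ^ 2 = g x := by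
  have hd : ∀ y : ℝ, HasDerivAt (fun z => f z ^ 2 - g z) 0 y := by
    intro y
    have h1 : HasDerivAt (fun z => f z ^ 2) (2 * f y * Real.exp (-y ^ 2)) y := by
      have := (hf_deriv y).pow 2
      show HasDerivAt (f ^ 2) (2 * f y * Real.exp (-y ^ 2)) y
      simpa [mul_comm, mul_assoc, mul_left_comm] using this
    have h2 := hg_deriv y
    have heq : (∫ s in (0:ℝ)..1, 2 * y * Real.exp (-y ^ 2 * (1 + s ^ 2)))
        = 2 * f y * Real.exp (-y ^ 2) := by
      have hsplit : ∀ s : ℝ, 2 * y * Real.exp (-y ^ 2 * (1 + s ^ 2))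
          = (2 * y * Real.exp (-y ^ 2)) * Real.exp (-y ^ 2 * s ^ 2) := by
        intro s
        rw [mul_assoc, mul_assoc, ← Real.exp_add]
        ring_nf
      calc (∫ s in (0:ℝ)..1, 2 * y * Real.exp (-y ^ 2 * (1 + s ^ 2)))
          = ∫ s in (0:ℝ)..1, (2 * y * Real.exp (-y ^ 2)) * Real.exp (-y ^ 2 * s ^ 2) := by
            simp_rw [hsplit]
        _ = (2 * y * Real.exp (-y ^ 2)) * ∫ s in (0:ℝ)..1, Real.exp (-y ^ 2 * s ^ 2) :=
            intervalIntegral.integral_const_mul _ _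
        _ = 2 * f y * Real.exp (-y ^ 2) := by rw [f_subst y]; ring
    have := h1.sub (heq ▸ h2)
    show HasDerivAt ((fun z => f z ^ 2) - g) 0 y
    simpa using this
  have hconst := is_const_of_deriv_eq_zero (f := fun z => f z ^ 2 - g z)
    (fun y => (hd y).differentiableAt) (fun y => (hd y).deriv) x 0
  have h0 : f 0 ^ 2 - g 0 = 0 := by
    simp [f, g]
  have := hconst
  rw [h0] at this
  linarith [this]

lemma g_le (x : ℝ) : g x ≤ π / 4 * (1 - Real.exp (-4 * x ^ 2 / π)) := by
  have hπ : (0:ℝ) < π := Real.pi_pos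
  set c : ℝ := 4 / π with hc
  have hcpi : c * (π / 4) = 1 := by field_simp [hc]; rw [hc]; field_simp
  set A : ℝ := 1 - Real.exp (-x ^ 2 * c) with hA
  set B : ℝ := Real.exp (-x ^ 2 * c) * x ^ 2 with hB
  have hpoint : ∀ s ∈ Set.Icc (0:ℝ) 1,
      (1 - Real.exp (-x ^ 2 * (1 + s ^ 2))) / (1 + s ^ 2)
        ≤ B + (A - B * c) * (1 / (1 + s ^ 2)) := by
    intro s _
    have hu : (0:ℝ) < 1 + s ^ 2 := by positivity
    have htan : Real.exp (-x ^ 2 * c) * (1 + x ^ 2 * (c - (1 + s ^ 2)))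
        ≤ Real.exp (-x ^ 2 * (1 + s ^ 2)) := by
      have h1 := Real.add_one_le_exp (x ^ 2 * c - x ^ 2 * (1 + s ^ 2))
      have h2 : Real.exp (-x ^ 2 * c) * Real.exp (x ^ 2 * c - x ^ 2 * (1 + s ^ 2))
          = Real.exp (-x ^ 2 * (1 + s ^ 2)) := by
        rw [← Real.exp_add]; ring_nf
      nlinarith [Real.exp_pos (-x ^ 2 * c)]
    have hnum : 1 - Real.exp (-x ^ 2 * (1 + s ^ 2)) ≤ A + B * (1 + s ^ 2) - B * c := by
      simp only [hA, hB]; nlinarith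
    calc (1 - Real.exp (-x ^ 2 * (1 + s ^ 2))) / (1 + s ^ 2)
        ≤ (A + B * (1 + s ^ 2) - B * c) / (1 + s ^ 2) := by gcongr
      _ = B + (A - B * c) * (1 / (1 + s ^ 2)) := by field_simp; ring
  have hint1 : IntervalIntegrable (fun s : ℝ => (1 - Real.exp (-x ^ 2 * (1 + s ^ 2))) / (1 + s ^ 2))
      volume 0 1 := (cont_aux x).intervalIntegrable 0 1
  have hcont2 : Continuous fun s : ℝ => B + (A - B * c) * (1 / (1 + s ^ 2)) := by
    apply continuous_const.add
    apply continuous_const.mul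
    apply Continuous.div continuous_const (by continuity)
    intro s; positivity
  have hmono := intervalIntegral.integral_mono_on (by norm_num : (0:ℝ) ≤ 1)
    hint1 (hcont2.intervalIntegrable 0 1) hpoint
  have hval : (∫ s in (0:ℝ)..1, (B + (A - B * c) * (1 / (1 + s ^ 2))))
      = B + (A - B * c) * (π / 4) := by
    have h0 : Continuous fun s : ℝ => 1 / (1 + s ^ 2) := by
      apply Continuous.div continuous_const (by continuity)
      intro s; positivity
    have hi2 : IntervalIntegrable (fun s : ℝ => (A - B * c) * (1 / (1 + s ^ 2)))
        volume 0 1 := (continuous_const.mul h0).intervalIntegrable 0 1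
    rw [intervalIntegral.integral_add intervalIntegrable_const hi2,
      intervalIntegral.integral_const, intervalIntegral.integral_const_mul,
      integral_one_div_one_add_sq]
    simp [Real.arctan_one, Real.arctan_zero]
  have hgval : g x ≤ B + (A - B * c) * (π / 4) := by
    rw [← hval]; exact hmono
  have hfinal : B + (A - B * c) * (π / 4) = π / 4 * A := by
    calc B + (A - B * c) * (π / 4) = B * (1 - c * (π / 4)) + π / 4 * A := by ring
      _ = π / 4 * A := by rw [hcpi]; ring
  have hAeq : A = 1 - Real.exp (-4 * x ^ 2 / π) := by
    rw [hA]; congr 2; rw [hc]; ring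
  rw [hfinal, hAeq] at hgval
  exact hgval

end WinitzkiAux

/-- One-sided Winitzki bound: for `x ≥ 0`, `erf(x) ≤ √(1 − exp(−4x²/π))`. -/
theorem erf_le_winitzki (x : ℝ) (hx : 0 ≤ x) :
    erf x ≤ Real.sqrt (1 - Real.exp (-4 * x ^ 2 / π)) := by
  have hπ : (0:ℝ) < π := Real.pi_pos
  have hsπ : (0:ℝ) < Real.sqrt π := Real.sqrt_pos.mpr hπ
  have hf_nonneg : 0 ≤ WinitzkiAux.f x := by
    apply intervalIntegral.integral_nonneg hx
    intro t _; exact (Real.exp_pos _).le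
  have herf_nonneg : 0 ≤ erf x := by
    apply mul_nonneg (by positivity)
    exact hf_nonneg
  have hsq : erf x ^ 2 = 4 / π * WinitzkiAux.f x ^ 2 := by
    have : erf x = 2 / Real.sqrt π * WinitzkiAux.f x := rfl
    rw [this, mul_pow, div_pow, Real.sq_sqrt hπ.le]
    norm_num
  have hkey : erf x ^ 2 ≤ 1 - Real.exp (-4 * x ^ 2 / π) := by
    rw [hsq, WinitzkiAux.sq_eq x]
    have := WinitzkiAux.g_le x
    calc 4 / π * WinitzkiAux.g x ≤ 4 / π * (π / 4 * (1 - Real.exp (-4 * x ^ 2 / π))) := by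
          apply mul_le_mul_of_nonneg_left this (by positivity)
      _ = 1 - Real.exp (-4 * x ^ 2 / π) := by field_simp
  calc erf x = Real.sqrt (erf x ^ 2) := by rw [Real.sqrt_sq herf_nonneg]
    _ ≤ Real.sqrt (1 - Real.exp (-4 * x ^ 2 / π)) := Real.sqrt_le_sqrt hkey
end
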